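/- Let (A, m) be a Noetherian local ring, M an A-module, and N ⊆ M a pure submodule. Then for every r ≥ 1, m^r M ∩ N = m^r N; that is, the m-adic topology on N coincides with the subspace topology induced from the m-adic topology on M. -/
import Mathlib

open TensorProduct

/-- Let `(A, m)` be a Noetherian local ring, `M` an `A`-module and `N ⊆ M` a pure
submodule.  Then `mʳM ∩ N = mʳN` for every `r ≥ 1`: the `m`-adic topology on `N` is the
subspace topology induced from the `m`-adic topology on `M`. -/
theorem smul_top_inf_eq_smul_of_pure
    {A : Type u} [CommRing A] [IsNoetherianRing A] [IsLocalRing A]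
    {M : Type u} [AddCommGroup M] [Module A M] (N : Submodule A M)
    (hpure : ∀ (L : Type u) [AddCommGroup L] [Module A L],
      Function.Injective (LinearMap.rTensor L N.subtype)) :
    ∀ r : ℕ, 1 ≤ r →
      (IsLocalRing.maximalIdeal A ^ r • (⊤ : Submodule A M)) ⊓ N
        = IsLocalRing.maximalIdeal A ^ r • N := by
  intro r _
  set I : Ideal A := IsLocalRing.maximalIdeal A ^ r with hI
  apply le_antisymm
  · rintro x ⟨hxI, hxN⟩
    -- work with L = A ⧸ I
    have hinj := hpure (A ⧸ I)
    -- x ⊗ 1 = 0 in M ⊗ (A ⧸ I)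
    have hM0 : (x ⊗ₜ[A] (1 : A ⧸ I) : M ⊗[A] (A ⧸ I)) = 0 := by
      have : TensorProduct.tensorQuotEquivQuotSMul M I (x ⊗ₜ[A] (1 : A ⧸ I)) = 0 := by
        show TensorProduct.tensorQuotEquivQuotSMul M I (x ⊗ₜ[A] Ideal.Quotient.mk I 1) = 0
        rw [TensorProduct.tensorQuotEquivQuotSMul_tmul_mk, one_smul,
          Submodule.Quotient.mk_eq_zero]
        exact hxI
      simpa using (TensorProduct.tensorQuotEquivQuotSMul M I).map_eq_zero_iff.mp this
    -- hence ⟨x, hxN⟩ ⊗ 1 = 0 in N ⊗ (A ⧸ I)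
    have hN0 : ((⟨x, hxN⟩ : N) ⊗ₜ[A] (1 : A ⧸ I) : N ⊗[A] (A ⧸ I)) = 0 := by
      apply hinj
      rw [map_zero]
      simpa [LinearMap.rTensor_tmul] using hM0
    -- so x ∈ I • ⊤ in N, i.e. x ∈ I • N in M
    have hmem : (⟨x, hxN⟩ : N) ∈ I • (⊤ : Submodule A N) := by
      rw [← Submodule.Quotient.mk_eq_zero]
      have h := congrArg (TensorProduct.tensorQuotEquivQuotSMul N I) hN0
      have h' : TensorProduct.tensorQuotEquivQuotSMul N I
          ((⟨x, hxN⟩ : N) ⊗ₜ[A] Ideal.Quotient.mk I 1) = 0 := h.trans (map_zero _)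
      rwa [TensorProduct.tensorQuotEquivQuotSMul_tmul_mk, one_smul] at h'
    have : x ∈ Submodule.map N.subtype (I • (⊤ : Submodule A N)) :=
      ⟨⟨x, hxN⟩, hmem, rfl⟩
    rwa [Submodule.map_smul'', Submodule.map_top, Submodule.range_subtype] at this
  · exact le_inf (Submodule.smul_mono le_rfl le_top) Submodule.smul_le_right
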